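/- In any real normed space, for any two linearly independent vectors x, y, the map Θ(t) := ∠Thy(x, y + t·x) is a strictly decreasing homeomorphism from ℝ onto the open interval (0, π). -/

import Mathlib

open Real Filter Set

set_option maxHeartbeats 2000000

private lemma sq_cancel {a b : ℝ} (ha : 0 ≤ a) (hb : 0 ≤ b) (h : a ^ 2 = b ^ 2) :
    a = b := by
  have h0 : (a - b) * (a + b) = 0 := by ring_nf; linarith
  rcases mul_eq_zero.mp h0 with h' | h'
  · linarith
  · linarith

private lemma tri_ineq {X : Type*} [NormedAddCommGroup X] [NormedSpace ℝ X]
    {a b : ℝ} (ha : 0 ≤ a) (hb : 0 ≤ b) {v w z : X}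
    (hz : (a + b) • z = a • v + b • w) :
    (a + b) * ‖z‖ ≤ a * ‖v‖ + b * ‖w‖ := by
  have h := norm_add_le (a • v) (b • w)
  rw [← hz, norm_smul, norm_smul, norm_smul, Real.norm_eq_abs, Real.norm_eq_abs,
    Real.norm_eq_abs, abs_of_nonneg ha, abs_of_nonneg hb,
    abs_of_nonneg (by linarith : (0:ℝ) ≤ a + b)] at h
  exact h

private lemma aux_strict {X : Type*} [NormedAddCommGroup X] [NormedSpace ℝ X]
    {u y : X} (hu : ‖u‖ = 1)
    (P : ∀ a b : ℝ, a • u + b • y = 0 → a = 0 ∧ b = 0)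
    {t1 t2 : ℝ} (hlt : t1 < t2) :
    ‖u + (‖y + t1 • u‖)⁻¹ • (y + t1 • u)‖ ^ 2 - ‖u - (‖y + t1 • u‖)⁻¹ • (y + t1 • u)‖ ^ 2 <
    ‖u + (‖y + t2 • u‖)⁻¹ • (y + t2 • u)‖ ^ 2 - ‖u - (‖y + t2 • u‖)⁻¹ • (y + t2 • u)‖ ^ 2 := by
  have hz : ∀ t : ℝ, y + t • u ≠ 0 := by
    intro t ht
    have h0 : t • u + (1:ℝ) • y = 0 := by rw [one_smul, add_comm]; exact ht
    exact one_ne_zero (P t 1 h0).2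
  have Npos : ∀ t : ℝ, 0 < ‖y + t • u‖ := fun t => norm_pos_iff.mpr (hz t)
  set N1 := ‖y + t1 • u‖ with hN1def
  set N2 := ‖y + t2 • u‖ with hN2def
  have hN1 : 0 < N1 := Npos t1
  have hN2 : 0 < N2 := Npos t2
  have hd : 0 < t2 - t1 := by linarith
  set S1 := ‖y + (t1 + N1) • u‖ with hS1def
  set S2 := ‖y + (t2 + N2) • u‖ with hS2def
  set D1 := ‖y + (t1 - N1) • u‖ with hD1def
  set D2 := ‖y + (t2 - N2) • u‖ with hD2def
  have hS1 : 0 < S1 := Npos (t1 + N1)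
  have hS2 : 0 < S2 := Npos (t2 + N2)
  have hD1 : 0 < D1 := Npos (t1 - N1)
  have hD2 : 0 < D2 := Npos (t2 - N2)
  clear_value N1 N2 S1 S2 D1 D2
  -- Lipschitz bounds
  have hLip1 : N2 ≤ N1 + (t2 - t1) := by
    have e : y + t2 • u = (y + t1 • u) + (t2 - t1) • u := by module
    calc N2 = ‖(y + t1 • u) + (t2 - t1) • u‖ := by rw [hN2def, e]
    _ ≤ N1 + ‖(t2 - t1) • u‖ := by rw [hN1def]; exact norm_add_le _ _
    _ = N1 + (t2 - t1) := by
        rw [norm_smul, Real.norm_eq_abs, abs_of_pos hd, hu, mul_one]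
  have hLip2 : N1 ≤ N2 + (t2 - t1) := by
    have e : y + t1 • u = (y + t2 • u) + (-(t2 - t1)) • u := by module
    calc N1 = ‖(y + t2 • u) + (-(t2 - t1)) • u‖ := by rw [hN1def, e]
    _ ≤ N2 + ‖(-(t2 - t1)) • u‖ := by rw [hN2def]; exact norm_add_le _ _
    _ = N2 + (t2 - t1) := by
        rw [norm_smul, Real.norm_eq_abs, abs_of_neg (by linarith), hu, mul_one, neg_neg]
  -- the four triangle inequalities
  have vTA : ((t2 - t1 + N2 - N1) + N1) • (y + (t1 + N1) • u)
      = (t2 - t1 + N2 - N1) • (y + t1 • u) + N1 • (y + (t2 + N2) • u) := by module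
  have TA : ((t2 - t1 + N2 - N1) + N1) * S1
      ≤ (t2 - t1 + N2 - N1) * N1 + N1 * S2 := by
    have h := tri_ineq (by linarith : (0:ℝ) ≤ t2 - t1 + N2 - N1) hN1.le vTA
    rwa [← hS1def, ← hN1def, ← hS2def] at h
  have vTA2 : (N2 + (t2 - t1)) • (y + t2 • u)
      = N2 • (y + t1 • u) + (t2 - t1) • (y + (t2 + N2) • u) := by module
  have TA2 : (N2 + (t2 - t1)) * N2 ≤ N2 * N1 + (t2 - t1) * S2 := by
    have h := tri_ineq hN2.le hd.le vTA2
    rwa [← hN2def, ← hN1def, ← hS2def] at h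
  have vTB : (N2 + (t2 - t1 + N1 - N2)) • (y + (t2 - N2) • u)
      = N2 • (y + (t1 - N1) • u) + (t2 - t1 + N1 - N2) • (y + t2 • u) := by module
  have TB : (N2 + (t2 - t1 + N1 - N2)) * D2
      ≤ N2 * D1 + (t2 - t1 + N1 - N2) * N2 := by
    have h := tri_ineq hN2.le (by linarith : (0:ℝ) ≤ t2 - t1 + N1 - N2) vTB
    rwa [← hD2def, ← hD1def, ← hN2def] at h
  have vTB2 : ((t2 - t1) + N1) • (y + t1 • u)
      = (t2 - t1) • (y + (t1 - N1) • u) + N1 • (y + t2 • u) := by module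
  have TB2 : ((t2 - t1) + N1) * N1 ≤ (t2 - t1) * D1 + N1 * N2 := by
    have h := tri_ineq hd.le hN1.le vTB2
    rwa [← hN1def, ← hD1def, ← hN2def] at h
  -- monotonicity
  have h1 := mul_le_mul_of_nonneg_right TA hN2.le
  have h2 := mul_le_mul_of_nonneg_right TA2 hN1.le
  have hMA : S1 * N2 ≤ S2 * N1 := by
    have key : (t2 - t1 + N2) * (S1 * N2) ≤ (t2 - t1 + N2) * (S2 * N1) := by
      linarith [h1, h2]
    exact le_of_mul_le_mul_left key (by linarith)
  have g1 := mul_le_mul_of_nonneg_right TB hN1.le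
  have g2 := mul_le_mul_of_nonneg_right TB2 hN2.le
  have hMB : D2 * N1 ≤ D1 * N2 := by
    have key : (t2 - t1 + N1) * (D2 * N1) ≤ (t2 - t1 + N1) * (D1 * N2) := by
      linarith [g1, g2]
    exact le_of_mul_le_mul_left key (by linarith)
  -- norm identities
  have eA1 : u + N1⁻¹ • (y + t1 • u) = N1⁻¹ • (y + (t1 + N1) • u) := by
    match_scalars <;> (field_simp; try ring)
  have eA2 : u + N2⁻¹ • (y + t2 • u) = N2⁻¹ • (y + (t2 + N2) • u) := by
    match_scalars <;> (field_simp; try ring)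
  have eB1 : u - N1⁻¹ • (y + t1 • u) = (-N1⁻¹) • (y + (t1 - N1) • u) := by
    match_scalars <;> (field_simp; try ring)
  have eB2 : u - N2⁻¹ • (y + t2 • u) = (-N2⁻¹) • (y + (t2 - N2) • u) := by
    match_scalars <;> (field_simp; try ring)
  have nA1 : ‖u + N1⁻¹ • (y + t1 • u)‖ = N1⁻¹ * S1 := by
    rw [eA1, norm_smul, Real.norm_eq_abs, abs_of_pos (inv_pos.mpr hN1), ← hS1def]
  have nA2 : ‖u + N2⁻¹ • (y + t2 • u)‖ = N2⁻¹ * S2 := by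
    rw [eA2, norm_smul, Real.norm_eq_abs, abs_of_pos (inv_pos.mpr hN2), ← hS2def]
  have nB1 : ‖u - N1⁻¹ • (y + t1 • u)‖ = N1⁻¹ * D1 := by
    rw [eB1, norm_smul, Real.norm_eq_abs, abs_neg, abs_of_pos (inv_pos.mpr hN1), ← hD1def]
  have nB2 : ‖u - N2⁻¹ • (y + t2 • u)‖ = N2⁻¹ * D2 := by
    rw [eB2, norm_smul, Real.norm_eq_abs, abs_neg, abs_of_pos (inv_pos.mpr hN2), ← hD2def]
  rw [nA1, nA2, nB1, nB2]
  by_contra hcon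
  push_neg at hcon
  have hcon' : (S2^2 - D2^2) * N1^2 ≤ (S1^2 - D1^2) * N2^2 := by
    have e2 : (N2⁻¹*S2)^2 - (N2⁻¹*D2)^2 = (S2^2 - D2^2) / N2^2 := by
      field_simp
    have e1 : (N1⁻¹*S1)^2 - (N1⁻¹*D1)^2 = (S1^2 - D1^2) / N1^2 := by
      field_simp
    rw [e1, e2, div_le_div_iff₀ (by positivity) (by positivity)] at hcon
    exact hcon
  have hsq1 : (S1*N2)^2 ≤ (S2*N1)^2 :=
    pow_le_pow_left₀ (by positivity) hMA 2
  have hsq2 : (D2*N1)^2 ≤ (D1*N2)^2 :=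
    pow_le_pow_left₀ (by positivity) hMB 2
  have eqS : (S1*N2)^2 = (S2*N1)^2 := le_antisymm hsq1 (by linarith [hcon', hsq2])
  have eqD : (D2*N1)^2 = (D1*N2)^2 := le_antisymm hsq2 (by linarith [hcon', hsq1])
  have hSeq : S1 * N2 = S2 * N1 := sq_cancel (by positivity) (by positivity) eqS
  have hDeq : D2 * N1 = D1 * N2 := sq_cancel (by positivity) (by positivity) eqD
  -- extract exact values
  have h1' : ((t2 - t1 + N2 - N1) + N1) * (S2*N1)
      ≤ ((t2 - t1 + N2 - N1) * N1 + N1 * S2) * N2 := by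
    calc ((t2 - t1 + N2 - N1) + N1) * (S2*N1)
        = (((t2 - t1 + N2 - N1) + N1) * S1) * N2 := by rw [← hSeq]; ring
    _ ≤ _ := h1
  have eqS2 : (t2 - t1) * S2 = N2 * (t2 - t1 + N2 - N1) := by
    have hle : ((t2-t1)*S2) * N1 ≤ (N2*(t2-t1+N2-N1)) * N1 := by linarith [h1']
    have hle' := le_of_mul_le_mul_right hle hN1
    linarith [TA2, hle']
  have g1' : (N2 + (t2 - t1 + N1 - N2)) * (D1*N2)
      ≤ (N2 * D1 + (t2 - t1 + N1 - N2) * N2) * N1 := by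
    calc (N2 + (t2 - t1 + N1 - N2)) * (D1*N2)
        = ((N2 + (t2 - t1 + N1 - N2)) * D2) * N1 := by rw [← hDeq]; ring
    _ ≤ _ := g1
  have eqD1 : (t2 - t1) * D1 = N1 * (t2 - t1 + N1 - N2) := by
    have hle : ((t2-t1)*D1) * N2 ≤ (N1*(t2-t1+N1-N2)) * N2 := by linarith [g1']
    have hle' := le_of_mul_le_mul_right hle hN2
    linarith [TB2, hle']
  have eqS1 : (t2 - t1) * S1 = N1 * (t2 - t1 + N2 - N1) := by
    have hSeq' : (t2-t1) * (S1 * N2) = (t2-t1) * (S2 * N1) := by rw [hSeq]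
    have eqS2' : ((t2-t1) * S2) * N1 = (N2 * (t2 - t1 + N2 - N1)) * N1 := by rw [eqS2]
    have : ((t2-t1) * S1) * N2 = (N1 * (t2 - t1 + N2 - N1)) * N2 := by linarith
    exact mul_right_cancel₀ hN2.ne' this
  have eqD2 : (t2 - t1) * D2 = N2 * (t2 - t1 + N1 - N2) := by
    have hDeq' : (t2-t1) * (D2 * N1) = (t2-t1) * (D1 * N2) := by rw [hDeq]
    have eqD1' : ((t2-t1) * D1) * N2 = (N1 * (t2 - t1 + N1 - N2)) * N2 := by rw [eqD1]
    have : ((t2-t1) * D2) * N1 = (N2 * (t2 - t1 + N1 - N2)) * N1 := by linarith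
    exact mul_right_cancel₀ hN1.ne' this
  -- both slack quantities are strictly positive
  have hp : 0 < t2 - t1 + N2 - N1 := by
    rcases (by linarith : (0:ℝ) ≤ t2 - t1 + N2 - N1).lt_or_eq with h | h
    · exact h
    · exfalso
      have h0 : (t2 - t1) * S2 = 0 := by rw [eqS2, ← h, mul_zero]
      rcases mul_eq_zero.mp h0 with h' | h' <;> [linarith; linarith]
  have hm : 0 < t2 - t1 + N1 - N2 := by
    rcases (by linarith : (0:ℝ) ≤ t2 - t1 + N1 - N2).lt_or_eq with h | h
    · exact h
    · exfalso
      have h0 : (t2 - t1) * D1 = 0 := by rw [eqD1, ← h, mul_zero]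
      rcases mul_eq_zero.mp h0 with h' | h' <;> [linarith; linarith]
  -- dual functional at u
  have hune : u ≠ 0 := by
    intro h0; rw [h0, norm_zero] at hu; norm_num at hu
  obtain ⟨g, hgn, hgu⟩ := exists_dual_vector ℝ u (norm_ne_zero_iff.mpr hune)
  have hgu1 : g u = 1 := by simpa [hu] using hgu
  have gb : ∀ v : X, g v ≤ ‖v‖ := by
    intro v
    have := g.le_opNorm v
    rw [hgn, one_mul, Real.norm_eq_abs] at this
    exact (le_abs_self _).trans this
  have ga1 : g (u + N1⁻¹ • (y + t1 • u)) ≤ N1⁻¹ * S1 := nA1 ▸ gb _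
  have gb1 : g (u - N1⁻¹ • (y + t1 • u)) ≤ N1⁻¹ * D1 := nB1 ▸ gb _
  have ga2 : g (u + N2⁻¹ • (y + t2 • u)) ≤ N2⁻¹ * S2 := nA2 ▸ gb _
  have gb2 : g (u - N2⁻¹ • (y + t2 • u)) ≤ N2⁻¹ * D2 := nB2 ▸ gb _
  have hsum1 : g (u + N1⁻¹ • (y + t1 • u)) + g (u - N1⁻¹ • (y + t1 • u)) = 2 := by
    have e : (u + N1⁻¹ • (y + t1 • u)) + (u - N1⁻¹ • (y + t1 • u)) = (2:ℝ) • u := by module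
    rw [← map_add, e, map_smul, smul_eq_mul, hgu1, mul_one]
  have hsum2 : g (u + N2⁻¹ • (y + t2 • u)) + g (u - N2⁻¹ • (y + t2 • u)) = 2 := by
    have e : (u + N2⁻¹ • (y + t2 • u)) + (u - N2⁻¹ • (y + t2 • u)) = (2:ℝ) • u := by module
    rw [← map_add, e, map_smul, smul_eq_mul, hgu1, mul_one]
  have hval1 : N1⁻¹ * S1 + N1⁻¹ * D1 = 2 := by
    have h' : (t2 - t1) * (S1 + D1) = (t2 - t1) * (2 * N1) := by linarith [eqS1, eqD1]
    have h'' : S1 + D1 = 2 * N1 := mul_left_cancel₀ hd.ne' h'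
    field_simp
    linarith
  have hval2 : N2⁻¹ * S2 + N2⁻¹ * D2 = 2 := by
    have h' : (t2 - t1) * (S2 + D2) = (t2 - t1) * (2 * N2) := by linarith [eqS2, eqD2]
    have h'' : S2 + D2 = 2 * N2 := mul_left_cancel₀ hd.ne' h'
    field_simp
    linarith
  have ea1 : g (u + N1⁻¹ • (y + t1 • u)) = N1⁻¹ * S1 := by linarith
  have ea2 : g (u + N2⁻¹ • (y + t2 • u)) = N2⁻¹ * S2 := by linarith
  -- values of g on the unit vectors w i
  have gw1 : g (N1⁻¹ • (y + t1 • u)) = N1⁻¹ * S1 - 1 := by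
    have h := map_add g u (N1⁻¹ • (y + t1 • u))
    rw [ea1, hgu1] at h
    linarith
  have gw2 : g (N2⁻¹ • (y + t2 • u)) = N2⁻¹ * S2 - 1 := by
    have h := map_add g u (N2⁻¹ • (y + t2 • u))
    rw [ea2, hgu1] at h
    linarith
  have gz1 : g y + t1 = S1 - N1 := by
    have h := map_smul g N1⁻¹ (y + t1 • u)
    rw [smul_eq_mul, gw1] at h
    have hN1' : N1 ≠ 0 := hN1.ne'
    field_simp [hgu1] at h
    rw [map_add, map_smul, hgu1, smul_eq_mul, mul_one] at h
    linarith
  have gz2 : g y + t2 = S2 - N2 := by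
    have h := map_smul g N2⁻¹ (y + t2 • u)
    rw [smul_eq_mul, gw2] at h
    have hN2' : N2 ≠ 0 := hN2.ne'
    field_simp [hgu1] at h
    rw [map_add, map_smul, hgu1, smul_eq_mul, mul_one] at h
    linarith
  have hg : t2 - t1 = S2 - N2 - (S1 - N1) := by linarith [gz1, gz2]
  have final : (t2 - t1)^2 = (N2 - N1)^2 := by
    linear_combination (t2 - t1) * hg + eqS2 - eqS1
  linarith [mul_pos hp hm, final]

theorem stmt_13 {X : Type*} [NormedAddCommGroup X] [NormedSpace ℝ X]
    (x y : X) (h : LinearIndependent ℝ ![x, y])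
    (Θ : ℝ → ℝ)
    (hΘ : ∀ t, Θ t = Real.arccos ((1/4) *
      (‖(‖x‖)⁻¹ • x + (‖y + t • x‖)⁻¹ • (y + t • x)‖ ^ 2 -
       ‖(‖x‖)⁻¹ • x - (‖y + t • x‖)⁻¹ • (y + t • x)‖ ^ 2))) :
    StrictAnti Θ ∧ Continuous Θ ∧ Set.range Θ = Set.Ioo 0 Real.pi := by
  have hP : ∀ a b : ℝ, a • x + b • y = 0 → a = 0 ∧ b = 0 :=
    LinearIndependent.pair_iff.mp h
  have hx : x ≠ 0 := by
    intro h0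
    have := (hP 1 0 (by simp [h0])).1
    norm_num at this
  have hnx : 0 < ‖x‖ := norm_pos_iff.mpr hx
  set u : X := (‖x‖)⁻¹ • x with hudef
  have hu : ‖u‖ = 1 := norm_smul_inv_norm hx
  have hP' : ∀ a b : ℝ, a • u + b • y = 0 → a = 0 ∧ b = 0 := by
    intro a b hab
    have h1 : (a * ‖x‖⁻¹) • x + b • y = 0 := by
      rw [mul_smul]
      rw [hudef, smul_comm] at hab
      convert hab using 2
      rw [smul_comm]
    obtain ⟨ha, hb⟩ := hP _ _ h1
    refine ⟨?_, hb⟩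
    rcases mul_eq_zero.mp ha with h' | h'
    · exact h'
    · exact absurd h' (inv_ne_zero hnx.ne')
  have hzx : ∀ t : ℝ, y + t • x ≠ 0 := by
    intro t h0
    have h1 : t • x + (1:ℝ) • y = 0 := by rw [one_smul, add_comm]; exact h0
    exact one_ne_zero (hP t 1 h1).2
  have hNx : ∀ t : ℝ, 0 < ‖y + t • x‖ := fun t => norm_pos_iff.mpr (hzx t)
  -- the scaled parameter identity
  have hxu : ∀ t : ℝ, y + t • x = y + (t * ‖x‖) • u := by
    intro t
    rw [hudef, smul_smul]
    congr 2
    field_simp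
  set W : ℝ → X := fun t => (‖y + t • x‖)⁻¹ • (y + t • x) with hWdef
  set G : ℝ → ℝ := fun t => (1/4 : ℝ) * (‖u + W t‖ ^ 2 - ‖u - W t‖ ^ 2) with hGdef
  have hΘ' : ∀ t, Θ t = Real.arccos (G t) := hΘ
  -- strict monotonicity of G
  have hGmono : StrictMono G := by
    intro t1 t2 hlt
    have h12 : t1 * ‖x‖ < t2 * ‖x‖ := mul_lt_mul_of_pos_right hlt hnx
    have key := aux_strict hu hP' h12
    rw [← hxu t1, ← hxu t2] at key
    simp only [hGdef, hWdef]
    linarith [key]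
  -- continuity
  have hc1 : Continuous fun t : ℝ => y + t • x := continuous_const.add (continuous_id.smul continuous_const)
  have hWcont : Continuous W := by
    rw [hWdef]
    exact ((hc1.norm).inv₀ fun t => (hNx t).ne').smul hc1
  have hGcont : Continuous G := by
    rw [hGdef]
    exact continuous_const.mul
      ((((continuous_const.add hWcont).norm).pow 2).sub
        (((continuous_const.sub hWcont).norm).pow 2))
  -- nondegeneracy in the u-world
  have hzu : ∀ s : ℝ, y + s • u ≠ 0 := by
    intro s h0
    have h1 : s • u + (1:ℝ) • y = 0 := by rw [one_smul, add_comm]; exact h0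
    exact one_ne_zero (hP' s 1 h1).2
  have hNu : ∀ s : ℝ, 0 < ‖y + s • u‖ := fun s => norm_pos_iff.mpr (hzu s)
  have hne_sub : ∀ t : ℝ, u - W t ≠ 0 := by
    intro t h0
    rw [hWdef] at h0
    simp only [hxu t] at h0
    set s := t * ‖x‖
    set N := ‖y + s • u‖ with hNdef
    have e : (1 - N⁻¹ * s) • u + (-N⁻¹) • y = u - N⁻¹ • (y + s • u) := by module
    have h2 : (1 - N⁻¹ * s) • u + (-N⁻¹) • y = 0 := by rw [e]; exact h0
    have := (hP' _ _ h2).2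
    have hN : 0 < N := hNu s
    exact absurd (neg_eq_zero.mp this) (inv_ne_zero hN.ne')
  have hne_add : ∀ t : ℝ, u + W t ≠ 0 := by
    intro t h0
    rw [hWdef] at h0
    simp only [hxu t] at h0
    set s := t * ‖x‖
    set N := ‖y + s • u‖ with hNdef
    have e : (1 + N⁻¹ * s) • u + (N⁻¹) • y = u + N⁻¹ • (y + s • u) := by module
    have h2 : (1 + N⁻¹ * s) • u + (N⁻¹) • y = 0 := by rw [e]; exact h0
    have := (hP' _ _ h2).2
    have hN : 0 < N := hNu s
    exact absurd this (inv_ne_zero hN.ne')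
  have hWnorm : ∀ t, ‖W t‖ = 1 := fun t => norm_smul_inv_norm (hzx t)
  -- G takes values in (-1, 1)
  have hGmem : ∀ t : ℝ, G t ∈ Set.Ioo (-1 : ℝ) 1 := by
    intro t
    have ha : ‖u + W t‖ ≤ 2 := by
      calc ‖u + W t‖ ≤ ‖u‖ + ‖W t‖ := norm_add_le _ _
      _ = 2 := by rw [hu, hWnorm t]; norm_num
    have hb : ‖u - W t‖ ≤ 2 := by
      calc ‖u - W t‖ ≤ ‖u‖ + ‖W t‖ := norm_sub_le _ _
      _ = 2 := by rw [hu, hWnorm t]; norm_num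
    have ha0 : 0 < ‖u + W t‖ := norm_pos_iff.mpr (hne_add t)
    have hb0 : 0 < ‖u - W t‖ := norm_pos_iff.mpr (hne_sub t)
    constructor
    · simp only [hGdef]
      nlinarith [ha, hb, ha0, hb0]
    · simp only [hGdef]
      nlinarith [ha, hb, ha0, hb0]
  -- limits of W at ±∞
  have hHcont : ContinuousAt (fun v : X => (‖v‖)⁻¹ • v) x := by
    exact ((continuous_norm.continuousAt).inv₀ hnx.ne').smul continuousAt_id
  have hHcont' : ContinuousAt (fun v : X => (‖v‖)⁻¹ • v) (-x) := by
    have : ‖(-x : X)‖ ≠ 0 := by simpa using hnx.ne'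
    exact ((continuous_norm.continuousAt).inv₀ this).smul continuousAt_id
  have hWtop : Filter.Tendsto W Filter.atTop (nhds u) := by
    have hlim : Filter.Tendsto (fun t : ℝ => t⁻¹ • y + x) Filter.atTop (nhds x) := by
      have h0 : Filter.Tendsto (fun t : ℝ => t⁻¹) Filter.atTop (nhds 0) :=
        tendsto_inv_atTop_zero
      have := (h0.smul_const y).add_const x
      simpa using this
    have hcomp := hHcont.tendsto.comp hlim
    have heq : ∀ᶠ t : ℝ in Filter.atTop,
        (fun v : X => (‖v‖)⁻¹ • v) (t⁻¹ • y + x) = W t := by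
      filter_upwards [Filter.eventually_gt_atTop (0:ℝ)] with t ht
      have ht' : t ≠ 0 := ht.ne'
      have e1 : t⁻¹ • y + x = t⁻¹ • (y + t • x) := by
        rw [smul_add, smul_smul, inv_mul_cancel₀ ht', one_smul]
      rw [hWdef]
      simp only [e1, norm_smul, Real.norm_eq_abs, abs_of_pos (inv_pos.mpr ht), smul_smul]
      congr 1
      rw [mul_inv]
      field_simp [ht', (hNx t).ne']
    have hres : Filter.Tendsto W Filter.atTop (nhds ((‖x‖)⁻¹ • x)) := hcomp.congr' heq
    rw [← hudef] at hres
    exact hres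
  have hWbot : Filter.Tendsto W Filter.atBot (nhds (-u)) := by
    have hlim : Filter.Tendsto (fun t : ℝ => (-t)⁻¹ • y + -x) Filter.atBot (nhds (-x)) := by
      have h0 : Filter.Tendsto (fun t : ℝ => (-t)⁻¹) Filter.atBot (nhds 0) :=
        tendsto_inv_atTop_zero.comp tendsto_neg_atBot_atTop
      have := (h0.smul_const y).add_const (-x)
      simpa using this
    have hcomp := hHcont'.tendsto.comp hlim
    have heq : ∀ᶠ t : ℝ in Filter.atBot,
        (fun v : X => (‖v‖)⁻¹ • v) ((-t)⁻¹ • y + -x) = W t := by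
      filter_upwards [Filter.eventually_lt_atBot (0:ℝ)] with t ht
      have ht' : (0:ℝ) < -t := by linarith
      have htne : t ≠ 0 := by linarith
      have e1 : (-t)⁻¹ • y + -x = (-t)⁻¹ • (y + t • x) := by
        rw [smul_add, smul_smul, inv_neg, neg_mul, inv_mul_cancel₀ htne, neg_one_smul]
      rw [hWdef]
      simp only [e1, norm_smul, Real.norm_eq_abs, abs_of_pos (inv_pos.mpr ht'), smul_smul]
      congr 1
      field_simp [htne, (hNx t).ne']
    have hres : Filter.Tendsto W Filter.atBot (nhds ((‖(-x : X)‖)⁻¹ • (-x : X))) :=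
      hcomp.congr' heq
    have hval : (‖(-x : X)‖)⁻¹ • (-x : X) = -u := by
      rw [hudef, norm_neg, smul_neg]
    rwa [hval] at hres
  -- limits of G
  have hFc : Continuous fun v : X => (1/4 : ℝ) * (‖u + v‖ ^ 2 - ‖u - v‖ ^ 2) :=
    continuous_const.mul
      ((((continuous_const.add continuous_id).norm).pow 2).sub
        (((continuous_const.sub continuous_id).norm).pow 2))
  have hGtop : Filter.Tendsto G Filter.atTop (nhds 1) := by
    have h2 : Filter.Tendsto (fun t => (1/4 : ℝ) * (‖u + W t‖ ^ 2 - ‖u - W t‖ ^ 2))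
        Filter.atTop (nhds ((1/4 : ℝ) * (‖u + u‖ ^ 2 - ‖u - u‖ ^ 2))) :=
      (hFc.continuousAt (x := u)).tendsto.comp hWtop
    have hval : (1/4 : ℝ) * (‖u + u‖ ^ 2 - ‖u - u‖ ^ 2) = 1 := by
      have e2 : u + u = (2:ℝ) • u := by module
      rw [e2, norm_smul, sub_self, norm_zero]
      simp [hu]
      norm_num
    rw [hval] at h2
    exact h2
  have hGbot : Filter.Tendsto G Filter.atBot (nhds (-1)) := by
    have h2 : Filter.Tendsto (fun t => (1/4 : ℝ) * (‖u + W t‖ ^ 2 - ‖u - W t‖ ^ 2))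
        Filter.atBot (nhds ((1/4 : ℝ) * (‖u + -u‖ ^ 2 - ‖u - -u‖ ^ 2))) :=
      (hFc.continuousAt (x := -u)).tendsto.comp hWbot
    have hval : (1/4 : ℝ) * (‖u + -u‖ ^ 2 - ‖u - -u‖ ^ 2) = -1 := by
      have e1 : u + -u = (0 : X) := by abel
      have e2 : u - -u = (2:ℝ) • u := by module
      rw [e1, e2, norm_smul, norm_zero]
      simp [hu]
      norm_num
    rw [hval] at h2
    exact h2
  -- conclusions
  refine ⟨?_, ?_, ?_⟩
  · intro t1 t2 hlt
    rw [hΘ' t1, hΘ' t2]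
    exact Real.strictAntiOn_arccos ⟨(hGmem t1).1.le, (hGmem t1).2.le⟩
      ⟨(hGmem t2).1.le, (hGmem t2).2.le⟩ (hGmono hlt)
  · have : Θ = fun t => Real.arccos (G t) := funext hΘ'
    rw [this]
    exact Real.continuous_arccos.comp hGcont
  · ext θv
    constructor
    · rintro ⟨t, rfl⟩
      rw [hΘ' t]
      constructor
      · exact Real.arccos_pos.mpr (hGmem t).2
      · rw [Real.arccos]
        have := Real.neg_pi_div_two_lt_arcsin.mpr (hGmem t).1
        linarith
    · rintro ⟨hθ1, hθ2⟩
      have hc1' : Real.cos θv < 1 := by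
        have := Real.strictAntiOn_cos (Set.mem_Icc.mpr ⟨le_refl 0, Real.pi_pos.le⟩)
          (Set.mem_Icc.mpr ⟨hθ1.le, hθ2.le⟩) hθ1
        simpa using this
      have hc2' : -1 < Real.cos θv := by
        have := Real.strictAntiOn_cos (Set.mem_Icc.mpr ⟨hθ1.le, hθ2.le⟩)
          (Set.mem_Icc.mpr ⟨Real.pi_pos.le, le_refl Real.pi⟩) hθ2
        rw [Real.cos_pi] at this
        linarith
      obtain ⟨ta, hta⟩ := (hGtop.eventually_const_lt hc1').exists
      obtain ⟨tb, htb⟩ := (hGbot.eventually_lt_const hc2').exists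
      have hlt : tb < ta := by
        by_contra hh
        push_neg at hh
        have := hGmono.le_iff_le.mpr hh
        linarith
      obtain ⟨t0, _, ht0⟩ := intermediate_value_Icc hlt.le hGcont.continuousOn
        (Set.mem_Icc.mpr ⟨htb.le, hta.le⟩)
      exact ⟨t0, by rw [hΘ' t0, ht0, Real.arccos_cos hθ1.le hθ2.le]⟩
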